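/- Let n ≥ 1, l ∈ [0,2n], and 𝐚 = (a_1,…,a_l) a strictly increasing sequence of integers in [1,2n]. For each i ∈ [1,l], one has a_i ∈ Rem(𝐚) if and only if one of the following holds: (1) a_i is odd, i < l, a_{i+1} = a_i + 1, and a_i < 2i − |Rem(a_1,…,a_{i−1})|; (2) a_i is even, i > 1, a_{i−1} = a_i − 1, and a_i < 2i − |Rem(a_1,…,a_{i−2})| − 1. -/

import Mathlib

/-- `remAux` computes the set of removable entries of a strictly increasing
sequence, given as a list in *reversed* order (so the head is the last entry). -/
def remAux : List ℕ → Finset ℕ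
  | [] => ∅
  | [_] => ∅
  | b :: a :: rest =>
    if Even b ∧ a + 1 = b ∧ b + (remAux rest).card + 1 < 2 * (rest.length + 2) then
      insert a (insert b (remAux rest))
    else remAux (a :: rest)

/-- `remSet 𝐚` : the set `Rem(𝐚)` of removable entries of the strictly
increasing sequence `𝐚 = (a_1, …, a_l)` (given in its natural order). -/
def remSet (l : List ℕ) : Finset ℕ := remAux l.reverse

/-- `redSeq 𝐚` : the reduction `red(𝐚)`, i.e. `𝐚` with the removable entries
removed. -/
def redSeq (l : List ℕ) : List ℕ := l.filter (fun x => decide (x ∉ remSet l))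

lemma remAux_subset : ∀ (l : List ℕ) (z : ℕ), z ∈ remAux l → z ∈ l := by
  intro l
  induction l using remAux.induct with
  | case1 => simp [remAux]
  | case2 x => simp [remAux]
  | case3 b a rest h ih =>
    intro z hz
    rw [remAux, if_pos h] at hz
    simp only [Finset.mem_insert] at hz
    rcases hz with rfl | rfl | hz <;> simp_all
  | case4 b a rest h ih1 ih =>
    intro z hz
    rw [remAux, if_neg h] at hz
    have := ih z hz
    simp_all

lemma remSet_subset (l : List ℕ) (z : ℕ) (h : z ∈ remSet l) : z ∈ l := by
  have := remAux_subset l.reverse z h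
  simpa using this

lemma remSet_concat2 (p : List ℕ) (x y : ℕ) :
    remSet (p ++ [x, y]) =
      if Even y ∧ x + 1 = y ∧ y + (remSet p).card + 1 < 2 * (p.length + 2) then
        insert x (insert y (remSet p))
      else remSet (p ++ [x]) := by
  have h1 : (p ++ [x, y]).reverse = y :: x :: p.reverse := by simp
  have h2 : (p ++ [x]).reverse = x :: p.reverse := by simp
  rw [remSet, h1, remAux, remSet, remSet, h2]
  simp [List.length_reverse]

lemma remSet_single (x : ℕ) : remSet [x] = ∅ := rfl

lemma getD_app_lt (p s : List ℕ) {j : ℕ} (h : j < p.length) :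
    (p ++ s).getD j 0 = p.getD j 0 := List.getD_append _ _ _ _ h

lemma getD_app_len (p : List ℕ) (x : ℕ) (s : List ℕ) :
    (p ++ x :: s).getD p.length 0 = x := by
  rw [List.getD_append_right _ _ _ _ le_rfl]
  simp

lemma getD_app_len1 (p : List ℕ) (x y : ℕ) :
    (p ++ [x, y]).getD (p.length + 1) 0 = y := by
  rw [List.getD_append_right _ _ _ _ (by omega)]
  simp

lemma take_app (p s : List ℕ) {j : ℕ} (h : j ≤ p.length) :
    (p ++ s).take j = p.take j := List.take_append_of_le_length h

theorem key (a : List ℕ) (hinc : a.Chain' (· < ·)) (i : ℕ) (hi1 : 1 ≤ i) (hil : i ≤ a.length) :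
    a.getD (i - 1) 0 ∈ remSet a ↔
      (Odd (a.getD (i - 1) 0) ∧ i < a.length ∧
        a.getD i 0 = a.getD (i - 1) 0 + 1 ∧
        a.getD (i - 1) 0 + (remSet (a.take (i - 1))).card < 2 * i) ∨
      (Even (a.getD (i - 1) 0) ∧ 1 < i ∧
        a.getD (i - 2) 0 + 1 = a.getD (i - 1) 0 ∧
        a.getD (i - 1) 0 + (remSet (a.take (i - 2))).card + 1 < 2 * i) := by
  by_cases hl2 : a.length ≤ 1
  · rcases a with _ | ⟨z, _ | ⟨w, t⟩⟩
    · simp at hil; omega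
    · have : i = 1 := by simp at hil; omega
      subst this
      simp [remSet_single]
    · simp at hl2
  · obtain ⟨p, x, y, ha⟩ : ∃ p x y, a = p ++ [x, y] := by
      rcases hr : a.reverse with _ | ⟨y, _ | ⟨x, r⟩⟩
      · have : a = [] := by rw [← List.reverse_reverse a, hr]; rfl
        subst this; simp at hl2
      · have : a = [y] := by rw [← List.reverse_reverse a, hr]; rfl
        subst this; simp at hl2
      · exact ⟨r.reverse, x, y, by rw [← List.reverse_reverse a, hr]; simp⟩
    subst ha
    have hlen : (p ++ [x, y]).length = p.length + 2 := by simp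
    have hil' : i ≤ p.length + 2 := by omega
    have hpair := List.isChain_iff_pairwise.mp hinc
    rw [List.pairwise_append] at hpair
    have hxy : x < y := by have := hpair.2.1; simp at this; exact this
    have hvx : ∀ v ∈ p, v < x := fun v hv => hpair.2.2 v hv x (by simp)
    have hvy : ∀ v ∈ p, v < y := fun v hv => hpair.2.2 v hv y (by simp)
    have hchp : p.Chain' (· < ·) := by
      exact List.isChain_iff_pairwise.mpr ((List.isChain_iff_pairwise.mp hinc).sublist (by simp))
    have hchq : (p ++ [x]).Chain' (· < ·) := by
      exact List.isChain_iff_pairwise.mpr ((List.isChain_iff_pairwise.mp hinc).sublist (List.Sublist.append_left (List.Sublist.cons₂ x (List.nil_sublist [y])) p))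
    have hltq : ∀ z ∈ remSet (p ++ [x]), z < y := by
      intro z hz
      have := remSet_subset _ z hz
      simp only [List.mem_append, List.mem_singleton] at this
      rcases this with h | rfl
      · exact hvy z h
      · exact hxy
    rw [remSet_concat2]
    have tL : (p ++ [x, y]).take p.length = p := List.take_left
    have gL : (p ++ [x, y]).getD p.length 0 = x := getD_app_len p x [y]
    have gL1 : (p ++ [x, y]).getD (p.length + 1) 0 = y := getD_app_len1 p x y
    by_cases hC : Even y ∧ x + 1 = y ∧ y + (remSet p).card + 1 < 2 * (p.length + 2)
    · rw [if_pos hC]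
      obtain hi | hi | hi : i = p.length + 2 ∨ i = p.length + 1 ∨ i ≤ p.length := by omega
      · -- Case A
        subst hi
        have e1 : p.length + 2 - 1 = p.length + 1 := by omega
        have e2 : p.length + 2 - 2 = p.length := by omega
        rw [e1, e2, gL1, gL, tL]
        refine iff_of_true (by simp) (Or.inr ⟨hC.1, by omega, hC.2.1, by omega⟩)
      · -- Case B
        subst hi
        have e1 : p.length + 1 - 1 = p.length := by omega
        rw [e1, gL, gL1, tL]
        have hox : Odd x := by
          obtain ⟨k, hk⟩ := hC.1
          exact ⟨k - 1, by omega⟩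
        refine iff_of_true (by simp) (Or.inl ⟨hox, by simp, hC.2.1.symm, by omega⟩)
      · -- Case C : i ≤ p.length
        have hiL : i - 1 < p.length := by omega
        have gv : (p ++ [x, y]).getD (i - 1) 0 = p.getD (i - 1) 0 := getD_app_lt p _ hiL
        have hvmem : p.getD (i - 1) 0 ∈ p := by
          rw [List.getD_eq_getElem _ _ hiL]
          exact List.getElem_mem _
        have hne : p.getD (i - 1) 0 ∈ insert x (insert y (remSet p)) ↔
            p.getD (i - 1) 0 ∈ remSet p := by
          rw [Finset.mem_insert, Finset.mem_insert]
          constructor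
          · rintro (h | h | h)
            · exact absurd h (hvx _ hvmem).ne
            · exact absurd h (hvy _ hvmem).ne
            · exact h
          · exact fun h => Or.inr (Or.inr h)
        have IH := key p hchp i hi1 (by omega)
        rw [gv, hne, IH]
        have t1 : (p ++ [x, y]).take (i - 1) = p.take (i - 1) := take_app p _ (by omega)
        have t2 : (p ++ [x, y]).take (i - 2) = p.take (i - 2) := take_app p _ (by omega)
        have g2 : (p ++ [x, y]).getD (i - 2) 0 = p.getD (i - 2) 0 := getD_app_lt p _ (by omega)
        rw [t1, t2, g2, hlen]
        rcases lt_or_eq_of_le hi with hlt | rfl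
        · have gi : (p ++ [x, y]).getD i 0 = p.getD i 0 := getD_app_lt p _ hlt
          rw [gi]
          constructor <;> rintro (⟨h1, h2, h3, h4⟩ | h) <;>
            first
              | exact Or.inl ⟨h1, by omega, h3, h4⟩
              | exact Or.inr h
        · rw [gL]
          constructor <;> rintro (⟨h1, h2, h3, h4⟩ | h)
          · omega
          · exact Or.inr h
          · exfalso
            obtain ⟨k, hk⟩ := hC.1
            obtain ⟨m, hm⟩ := h1
            have := hC.2.1
            omega
          · exact Or.inr h
    · rw [if_neg hC]
      have gLq : (p ++ [x]).getD p.length 0 = x := getD_app_len p x []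
      obtain hi | hi | hi : i = p.length + 2 ∨ i = p.length + 1 ∨ i ≤ p.length := by omega
      · -- Case D
        subst hi
        have e1 : p.length + 2 - 1 = p.length + 1 := by omega
        have e2 : p.length + 2 - 2 = p.length := by omega
        rw [e1, e2, gL1, gL, tL, hlen]
        refine iff_of_false (fun h => absurd (hltq _ h) (lt_irrefl y)) ?_
        rintro (⟨_, h2, _, _⟩ | ⟨h1, _, h3, h4⟩)
        · omega
        · exact hC ⟨h1, h3, by omega⟩
      · -- Case E
        subst hi
        have e1 : p.length + 1 - 1 = p.length := by omega
        rw [e1, gL, gL1, tL, hlen]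
        have IH := key (p ++ [x]) hchq (p.length + 1) (by omega) (by simp)
        have eq1 : (p ++ [x]).length = p.length + 1 := by simp
        rw [e1, gLq, eq1] at IH
        rw [IH]
        have t2 : (p ++ [x, y]).take (p.length + 1 - 2) = p.take (p.length + 1 - 2) :=
          take_app p _ (by omega)
        have t2q : (p ++ [x]).take (p.length + 1 - 2) = p.take (p.length + 1 - 2) :=
          take_app p _ (by omega)
        rw [t2, t2q]
        constructor <;> rintro (⟨h1, h2, h3, h4⟩ | ⟨h1, h2, h3, h4⟩)
        · omega
        · rcases Nat.eq_zero_or_pos p.length with hp0 | hp0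
          · omega
          · have g2 : (p ++ [x, y]).getD (p.length + 1 - 2) 0 = p.getD (p.length + 1 - 2) 0 :=
              getD_app_lt p _ (by omega)
            have g2q : (p ++ [x]).getD (p.length + 1 - 2) 0 = p.getD (p.length + 1 - 2) 0 :=
              getD_app_lt p _ (by omega)
            rw [g2q] at h3
            rw [g2]
            exact Or.inr ⟨h1, h2, h3, h4⟩
        · exfalso
          apply hC
          obtain ⟨m, hm⟩ := h1
          exact ⟨⟨m + 1, by omega⟩, h3.symm, by omega⟩
        · rcases Nat.eq_zero_or_pos p.length with hp0 | hp0
          · omega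
          · have g2 : (p ++ [x, y]).getD (p.length + 1 - 2) 0 = p.getD (p.length + 1 - 2) 0 :=
              getD_app_lt p _ (by omega)
            have g2q : (p ++ [x]).getD (p.length + 1 - 2) 0 = p.getD (p.length + 1 - 2) 0 :=
              getD_app_lt p _ (by omega)
            rw [g2] at h3
            rw [g2q]
            exact Or.inr ⟨h1, h2, h3, h4⟩
      · -- Case F : i ≤ p.length
        have hiL : i - 1 < p.length := by omega
        have gv : (p ++ [x, y]).getD (i - 1) 0 = p.getD (i - 1) 0 := getD_app_lt p _ hiL
        have gvq : (p ++ [x]).getD (i - 1) 0 = p.getD (i - 1) 0 := getD_app_lt p _ hiL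
        have IH := key (p ++ [x]) hchq i hi1 (by simp; omega)
        rw [gvq] at IH
        rw [gv, IH, hlen]
        have eq1 : (p ++ [x]).length = p.length + 1 := by simp
        rw [eq1]
        have t1 : (p ++ [x, y]).take (i - 1) = p.take (i - 1) := take_app p _ (by omega)
        have t1q : (p ++ [x]).take (i - 1) = p.take (i - 1) := take_app p _ (by omega)
        have t2 : (p ++ [x, y]).take (i - 2) = p.take (i - 2) := take_app p _ (by omega)
        have t2q : (p ++ [x]).take (i - 2) = p.take (i - 2) := take_app p _ (by omega)
        have g2 : (p ++ [x, y]).getD (i - 2) 0 = p.getD (i - 2) 0 := getD_app_lt p _ (by omega)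
        have g2q : (p ++ [x]).getD (i - 2) 0 = p.getD (i - 2) 0 := getD_app_lt p _ (by omega)
        have gi : (p ++ [x, y]).getD i 0 = (p ++ [x]).getD i 0 := by
          rcases lt_or_eq_of_le hi with hlt | rfl
          · rw [getD_app_lt p _ hlt, getD_app_lt p _ hlt]
          · rw [gL, gLq]
        rw [t1, t1q, t2, t2q, g2, g2q, gi]
        constructor <;> rintro (⟨h1, h2, h3, h4⟩ | h) <;>
          first
            | exact Or.inl ⟨h1, by omega, h3, h4⟩
            | exact Or.inr h
termination_by a.length
decreasing_by
  all_goals (subst ha; simp only [List.length_append, List.length_cons, List.length_nil]; omega)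


theorem stmt5 (n : ℕ) (hn : 1 ≤ n) (a : List ℕ)
    (hinc : a.Chain' (· < ·)) (hbd : ∀ x ∈ a, 1 ≤ x ∧ x ≤ 2 * n)
    (hlen : a.length ≤ 2 * n) (i : ℕ) (hi1 : 1 ≤ i) (hil : i ≤ a.length) :
    a.getD (i - 1) 0 ∈ remSet a ↔
      (Odd (a.getD (i - 1) 0) ∧ i < a.length ∧
        a.getD i 0 = a.getD (i - 1) 0 + 1 ∧
        a.getD (i - 1) 0 + (remSet (a.take (i - 1))).card < 2 * i) ∨
      (Even (a.getD (i - 1) 0) ∧ 1 < i ∧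
        a.getD (i - 2) 0 + 1 = a.getD (i - 1) 0 ∧
        a.getD (i - 1) 0 + (remSet (a.take (i - 2))).card + 1 < 2 * i) :=
  key a hinc i hi1 hil
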